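/- Second derivative identity and convexity of the spectral function: Let n ≥ 1 be an integer and k ≥ 1 an integer. For every x ∈ (0, n), γ_k″(x)/γ_k(x) = (γ_k′(x)/γ_k(x))² + Σ_{j=0}^{k−1} (2j+n)(n−2x) / ( (n+j−x)² (j+x)² ). In particular γ_k″(x) ≥ 0 for all x ∈ (0, n/2], so γ_k is convex on (0, n/2]. -/

import Mathlib

open Real

/-- The spectral function `γ_k(x) = Γ(x) Γ(n − x + k) / (Γ(n − x) Γ(x + k))`. -/
noncomputable def gammaFun (n k : ℕ) (x : ℝ) : ℝ :=
  Gamma x * Gamma ((n : ℝ) - x + k) / (Gamma ((n : ℝ) - x) * Gamma (x + k))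

noncomputable def gF (n k : ℕ) (x : ℝ) : ℝ :=
  ∑ j ∈ Finset.range k, (Real.log ((n : ℝ) - x + j) - Real.log (x + j))

noncomputable def g1 (n k : ℕ) (x : ℝ) : ℝ :=
  ∑ j ∈ Finset.range k, (-((n : ℝ) - x + j)⁻¹ - (x + j)⁻¹)

noncomputable def g2 (n k : ℕ) (x : ℝ) : ℝ :=
  ∑ j ∈ Finset.range k, (((x + (j : ℝ)) ^ 2)⁻¹ - (((n : ℝ) - x + j) ^ 2)⁻¹)

lemma gamma_prod (x : ℝ) (hx : 0 < x) (k : ℕ) :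
    Gamma (x + k) = Gamma x * ∏ j ∈ Finset.range k, (x + j) := by
  induction k with
  | zero => simp
  | succ k ih =>
    have h : (x + ((k : ℕ) + 1 : ℕ) : ℝ) = (x + k) + 1 := by push_cast; ring
    rw [h, Real.Gamma_add_one (by positivity), ih, Finset.prod_range_succ]
    ring

lemma gammaFun_eq (n k : ℕ) {x : ℝ} (hx : x ∈ Set.Ioo (0 : ℝ) (n : ℝ)) :
    gammaFun n k x = Real.exp (gF n k x) := by
  have hxp : 0 < x := hx.1
  have hnx : 0 < (n : ℝ) - x := by linarith [hx.2]
  have hΓx := Real.Gamma_pos_of_pos hxp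
  have hΓnx := Real.Gamma_pos_of_pos hnx
  have hR : ∀ j ∈ Finset.range k,
      Real.exp (Real.log ((n : ℝ) - x + j) - Real.log (x + j)) = ((n : ℝ) - x + j) / (x + j) := by
    intro j _
    rw [Real.exp_sub, Real.exp_log (by positivity), Real.exp_log (by positivity)]
  have hp2 : 0 < ∏ j ∈ Finset.range k, (x + (j : ℝ)) :=
    Finset.prod_pos fun j _ => by positivity
  rw [gF, Real.exp_sum, Finset.prod_congr rfl hR, Finset.prod_div_distrib, gammaFun,
    gamma_prod x hxp k, gamma_prod ((n : ℝ) - x) hnx k]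
  field_simp

lemma hasDerivAt_gF (n k : ℕ) {x : ℝ} (hx : x ∈ Set.Ioo (0 : ℝ) (n : ℝ)) :
    HasDerivAt (gF n k) (g1 n k x) x := by
  unfold gF g1
  apply HasDerivAt.fun_sum
  intro j _
  have hxp : 0 < x := hx.1
  have hnx : 0 < (n : ℝ) - x := by linarith [hx.2]
  have hjn : (0 : ℝ) ≤ j := Nat.cast_nonneg j
  have ha : HasDerivAt (fun y : ℝ => (n : ℝ) - y + j) (-1) x := by
    simpa using ((hasDerivAt_id x).const_sub (n : ℝ)).add_const (j : ℝ)
  have hb : HasDerivAt (fun y : ℝ => y + (j : ℝ)) 1 x := (hasDerivAt_id x).add_const _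
  have hane : (n : ℝ) - x + j ≠ 0 := by positivity
  have hbne : x + (j : ℝ) ≠ 0 := by positivity
  have := (ha.log hane).sub (hb.log hbne)
  convert this using 1
  · rfl
  · ring

lemma hasDerivAt_g1 (n k : ℕ) {x : ℝ} (hx : x ∈ Set.Ioo (0 : ℝ) (n : ℝ)) :
    HasDerivAt (g1 n k) (g2 n k x) x := by
  unfold g1 g2
  apply HasDerivAt.fun_sum
  intro j _
  have hxp : 0 < x := hx.1
  have hnx : 0 < (n : ℝ) - x := by linarith [hx.2]
  have hjn : (0 : ℝ) ≤ j := Nat.cast_nonneg j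
  have ha : HasDerivAt (fun y : ℝ => (n : ℝ) - y + j) (-1) x := by
    simpa using ((hasDerivAt_id x).const_sub (n : ℝ)).add_const (j : ℝ)
  have hb : HasDerivAt (fun y : ℝ => y + (j : ℝ)) 1 x := (hasDerivAt_id x).add_const _
  have hane : (n : ℝ) - x + j ≠ 0 := by positivity
  have hbne : x + (j : ℝ) ≠ 0 := by positivity
  have := ((ha.inv hane).neg).sub (hb.inv hbne)
  convert this using 1
  · funext y; simp only [Pi.sub_apply, Pi.neg_apply, Pi.inv_apply]
  · ring

lemma hasDerivAt_gammaFun (n k : ℕ) {x : ℝ} (hx : x ∈ Set.Ioo (0 : ℝ) (n : ℝ)) :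
    HasDerivAt (gammaFun n k) (Real.exp (gF n k x) * g1 n k x) x := by
  have h : HasDerivAt (fun y => Real.exp (gF n k y)) (Real.exp (gF n k x) * g1 n k x) x :=
    (hasDerivAt_gF n k hx).exp
  apply h.congr_of_eventuallyEq
  filter_upwards [isOpen_Ioo.mem_nhds hx] with y hy using gammaFun_eq n k hy

lemma hasDerivAt_deriv_gammaFun (n k : ℕ) {x : ℝ} (hx : x ∈ Set.Ioo (0 : ℝ) (n : ℝ)) :
    HasDerivAt (deriv (gammaFun n k))
      (Real.exp (gF n k x) * ((g1 n k x) ^ 2 + g2 n k x)) x := by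
  have h1 : HasDerivAt (fun y => Real.exp (gF n k y) * g1 n k y)
      (Real.exp (gF n k x) * g1 n k x * g1 n k x + Real.exp (gF n k x) * g2 n k x) x :=
    ((hasDerivAt_gF n k hx).exp).mul (hasDerivAt_g1 n k hx)
  have h2 : deriv (gammaFun n k) =ᶠ[nhds x] fun y => Real.exp (gF n k y) * g1 n k y := by
    filter_upwards [isOpen_Ioo.mem_nhds hx] with y hy using (hasDerivAt_gammaFun n k hy).deriv
  have := h1.congr_of_eventuallyEq h2
  refine this.congr_deriv ?_
  ring

lemma g2_eq (n k : ℕ) {x : ℝ} (hx : x ∈ Set.Ioo (0 : ℝ) (n : ℝ)) :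
    g2 n k x = ∑ j ∈ Finset.range k,
      (2 * (j : ℝ) + n) * ((n : ℝ) - 2 * x) / (((n : ℝ) + j - x) ^ 2 * ((j : ℝ) + x) ^ 2) := by
  apply Finset.sum_congr rfl
  intro j _
  have hxp : 0 < x := hx.1
  have hnx : 0 < (n : ℝ) - x := by linarith [hx.2]
  have hjn : (0 : ℝ) ≤ j := Nat.cast_nonneg j
  have h1 : x + (j : ℝ) ≠ 0 := by positivity
  have h2 : (n : ℝ) - x + j ≠ 0 := by positivity
  have h3 : (n : ℝ) + j - x ≠ 0 := by
    intro h; apply h2; linarith [h]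
  have h4 : (j : ℝ) + x ≠ 0 := by positivity
  field_simp
  ring

/-- Second derivative identity and convexity of the spectral function. -/
theorem gammaFun_second_deriv (n k : ℕ) (hn : 1 ≤ n) (hk : 1 ≤ k) :
    (∀ x ∈ Set.Ioo (0 : ℝ) (n : ℝ),
      deriv (deriv (gammaFun n k)) x / gammaFun n k x
        = (deriv (gammaFun n k) x / gammaFun n k x) ^ 2 +
            ∑ j ∈ Finset.range k,
              (2 * (j : ℝ) + n) * ((n : ℝ) - 2 * x) /
                (((n : ℝ) + j - x) ^ 2 * ((j : ℝ) + x) ^ 2)) ∧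
    (∀ x ∈ Set.Ioc (0 : ℝ) ((n : ℝ) / 2), 0 ≤ deriv (deriv (gammaFun n k)) x) ∧
    ConvexOn ℝ (Set.Ioc (0 : ℝ) ((n : ℝ) / 2)) (gammaFun n k) := by
  have hn1 : (1 : ℝ) ≤ n := by exact_mod_cast hn
  have hsub : ∀ x ∈ Set.Ioc (0 : ℝ) ((n : ℝ) / 2), x ∈ Set.Ioo (0 : ℝ) (n : ℝ) := by
    intro x hx
    exact ⟨hx.1, by linarith [hx.2]⟩
  have h2 : ∀ x ∈ Set.Ioc (0 : ℝ) ((n : ℝ) / 2), 0 ≤ deriv (deriv (gammaFun n k)) x := by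
    intro x hx
    have hx' := hsub x hx
    rw [(hasDerivAt_deriv_gammaFun n k hx').deriv]
    have hg2 : 0 ≤ g2 n k x := by
      apply Finset.sum_nonneg
      intro j _
      have hxp : 0 < x := hx.1
      have hjn : (0 : ℝ) ≤ j := Nat.cast_nonneg j
      have hle : x + (j : ℝ) ≤ (n : ℝ) - x + j := by linarith [hx.2]
      have hp1 : (0 : ℝ) < (x + (j : ℝ)) ^ 2 := by positivity
      have hsq : (x + (j : ℝ)) ^ 2 ≤ ((n : ℝ) - x + j) ^ 2 := by nlinarith
      have := inv_anti₀ hp1 hsq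
      linarith
    have hnn : 0 ≤ (g1 n k x) ^ 2 + g2 n k x := by positivity
    positivity
  refine ⟨?_, h2, ?_⟩
  · intro x hx
    have hg := gammaFun_eq n k hx
    rw [(hasDerivAt_gammaFun n k hx).deriv, (hasDerivAt_deriv_gammaFun n k hx).deriv, hg,
      ← g2_eq n k hx]
    have he : Real.exp (gF n k x) ≠ 0 := (Real.exp_pos _).ne'
    field_simp
  · apply convexOn_of_deriv2_nonneg (convex_Ioc _ _)
    · intro x hx
      exact ((hasDerivAt_gammaFun n k (hsub x hx)).differentiableAt).continuousAt.continuousWithinAt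
    · intro x hx
      rw [interior_Ioc] at hx
      exact ((hasDerivAt_gammaFun n k (hsub x (Set.Ioo_subset_Ioc_self hx))).differentiableAt).differentiableWithinAt
    · intro x hx
      rw [interior_Ioc] at hx
      exact ((hasDerivAt_deriv_gammaFun n k (hsub x (Set.Ioo_subset_Ioc_self hx))).differentiableAt).differentiableWithinAt
    · intro x hx
      rw [interior_Ioc] at hx
      have := h2 x (Set.Ioo_subset_Ioc_self hx)
      simpa [Function.iterate_succ, Function.iterate_zero] using this
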